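/- Consider the system ė = ν, ν̇ = -k₄e - k₅ν - k₆·ν/d with d = e + c > 0, positive gains k₄, k₅, k₆, and c > 0. For any initial condition with d(0) > 0, d(t) remains positive for all t ≥ 0. -/

import Mathlib

open Real Filter Topology Set

/-- For the system ė = ν, ν̇ = -k₄e - k₅ν - k₆ν/(e+c) with positive gains
and c > 0, if d = e + c satisfies d(0) > 0 then d(t) > 0 for all t ≥ 0. -/
theorem stmt_3
    (e ν : ℝ → ℝ) (k₄ k₅ k₆ c : ℝ)
    (hk₄ : 0 < k₄) (hk₅ : 0 < k₅) (hk₆ : 0 < k₆) (hc : 0 < c)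
    (he : ∀ t, HasDerivAt e (ν t) t)
    (hν : ∀ t, HasDerivAt ν
      (-k₄ * e t - k₅ * ν t - k₆ * ν t / (e t + c)) t)
    (h0 : e 0 + c > 0) :
    ∀ t ≥ (0:ℝ), e t + c > 0 := by
  by_contra hcon
  push_neg at hcon
  obtain ⟨t₁, ht₁0, ht₁⟩ := hcon
  set d : ℝ → ℝ := fun t => e t + c with hd_def
  have hd : ∀ t, HasDerivAt d (ν t) t := fun t => (he t).add_const c
  have hdc : Continuous d := by
    rw [continuous_iff_continuousAt]; exact fun t => (hd t).continuousAt
  set S : Set ℝ := Set.Ici 0 ∩ {t | d t ≤ 0} with hS_def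
  have hSne : S.Nonempty := ⟨t₁, ht₁0, ht₁⟩
  have hSbdd : BddBelow S := ⟨0, fun x hx => hx.1⟩
  have hSclosed : IsClosed S :=
    isClosed_Ici.inter (isClosed_le hdc continuous_const)
  set T : ℝ := sInf S with hT_def
  have hT : T ∈ S := hSclosed.csInf_mem hSne hSbdd
  have hT0 : 0 ≤ T := hT.1
  have hdT : d T ≤ 0 := hT.2
  have hTpos : 0 < T := by
    rcases hT0.lt_or_eq with h | h
    · exact h
    · exfalso; rw [← h] at hdT; exact absurd h0 (not_lt.mpr hdT)
  have hlt : ∀ t, 0 ≤ t → t < T → 0 < d t := by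
    intro t h1 h2
    by_contra hnn
    push_neg at hnn
    exact absurd (csInf_le hSbdd ⟨h1, hnn⟩) (not_le.mpr h2)
  -- Lyapunov function
  set L : ℝ → ℝ := fun t => k₄ / 2 * e t ^ 2 + 1 / 2 * ν t ^ 2 with hL_def
  have hL : ∀ t, HasDerivAt L
      (k₄ * e t * ν t + ν t * (-k₄ * e t - k₅ * ν t - k₆ * ν t / d t)) t := by
    intro t
    have h1 := ((he t).pow 2).const_mul (k₄ / 2)
    have h2 := ((hν t).pow 2).const_mul ((1:ℝ) / 2)
    refine (h1.add h2).congr_deriv ?_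
    ring
  have hLanti : AntitoneOn L (Set.Icc 0 T) := by
    apply antitoneOn_of_deriv_nonpos (convex_Icc 0 T)
    · exact fun t _ => (hL t).continuousAt.continuousWithinAt
    · rw [interior_Icc]; exact fun t _ => (hL t).differentiableAt.differentiableWithinAt
    · rw [interior_Icc]
      intro t ht
      rw [(hL t).deriv]
      have hdt : 0 < d t := hlt t ht.1.le ht.2
      have h1 : k₄ * e t * ν t + ν t * (-k₄ * e t - k₅ * ν t - k₆ * ν t / d t)
          = -(k₅ * ν t ^ 2) - k₆ * ν t ^ 2 / d t := by ring
      rw [h1]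
      have h2 : 0 ≤ k₆ * ν t ^ 2 / d t := div_nonneg (by positivity) hdt.le
      nlinarith [sq_nonneg (ν t)]
  have hL0 : 0 ≤ L 0 := by positivity
  set M : ℝ := Real.sqrt (2 * L 0 / k₄) with hM_def
  set M' : ℝ := Real.sqrt (2 * L 0) with hM'_def
  have hMnn : 0 ≤ M := Real.sqrt_nonneg _
  have hM'nn : 0 ≤ M' := Real.sqrt_nonneg _
  have hbound : ∀ t ∈ Set.Icc (0:ℝ) T, |e t| ≤ M ∧ |ν t| ≤ M' := by
    intro t ht
    have hLle : L t ≤ L 0 := hLanti ⟨le_refl 0, hT0⟩ ht ht.1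
    have hLt : k₄ / 2 * e t ^ 2 + 1 / 2 * ν t ^ 2 ≤ L 0 := hLle
    constructor
    · have h1 : e t ^ 2 ≤ 2 * L 0 / k₄ := by
        rw [le_div_iff₀ hk₄]
        simp only [hL_def] at hLle ⊢
        nlinarith [sq_nonneg (ν t), sq_nonneg (ν 0), sq_nonneg (e 0)]
      calc |e t| = Real.sqrt (e t ^ 2) := (Real.sqrt_sq_eq_abs _).symm
        _ ≤ M := Real.sqrt_le_sqrt h1
    · have h1 : ν t ^ 2 ≤ 2 * L 0 := by
        simp only [hL_def] at hLle ⊢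
        nlinarith [mul_nonneg hk₄.le (sq_nonneg (e t)), mul_nonneg hk₄.le (sq_nonneg (e 0))]
      calc |ν t| = Real.sqrt (ν t ^ 2) := (Real.sqrt_sq_eq_abs _).symm
        _ ≤ M' := Real.sqrt_le_sqrt h1
  -- auxiliary function F with F' = -k₄ e
  set F : ℝ → ℝ := fun t => k₆ * Real.log (d t) + ν t + k₅ * e t with hF_def
  have hF : ∀ t, 0 ≤ t → t < T → HasDerivAt F (-(k₄ * e t)) t := by
    intro t h1 h2
    have hdt : 0 < d t := hlt t h1 h2
    have hlog : HasDerivAt (fun x => Real.log (d x)) (ν t / d t) t :=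
      (hd t).log hdt.ne'
    have hsum := ((hlog.const_mul k₆).add (hν t)).add ((he t).const_mul k₅)
    refine hsum.congr_deriv ?_
    rw [show e t + c = d t from rfl]
    field_simp
    ring
  set G : ℝ → ℝ := fun t => F t + k₄ * M * t with hG_def
  have hG : ∀ t, 0 ≤ t → t < T → HasDerivAt G (-(k₄ * e t) + k₄ * M) t := by
    intro t h1 h2
    have := (hF t h1 h2).add ((hasDerivAt_id t).const_mul (k₄ * M))
    refine this.congr_deriv ?_
    ring
  have key : ∀ t, 0 ≤ t → t < T → F 0 - k₄ * M * T ≤ F t := by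
    intro t₀ ht₀0 ht₀T
    have hmono : MonotoneOn G (Set.Icc 0 t₀) := by
      apply monotoneOn_of_deriv_nonneg (convex_Icc 0 t₀)
      · intro s hs
        exact ((hG s hs.1 (lt_of_le_of_lt hs.2 ht₀T)).continuousAt).continuousWithinAt
      · rw [interior_Icc]
        intro s hs
        exact (hG s hs.1.le (lt_trans hs.2 ht₀T)).differentiableAt.differentiableWithinAt
      · rw [interior_Icc]
        intro s hs
        rw [(hG s hs.1.le (lt_trans hs.2 ht₀T)).deriv]
        have hes : |e s| ≤ M :=
          (hbound s ⟨hs.1.le, le_of_lt (lt_trans hs.2 ht₀T)⟩).1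
        have : e s ≤ M := le_of_abs_le hes
        nlinarith
    have hG0 : G 0 ≤ G t₀ := hmono ⟨le_refl 0, ht₀0⟩ ⟨ht₀0, le_refl t₀⟩ ht₀0
    have hG0' : G 0 = F 0 := by simp [hG_def]
    have hGt : G t₀ = F t₀ + k₄ * M * t₀ := rfl
    have ht₀T' : k₄ * M * t₀ ≤ k₄ * M * T := by
      apply mul_le_mul_of_nonneg_left ht₀T.le (by positivity)
    rw [hG0', hGt] at hG0
    linarith
  -- lower bound on d on [0, T)
  set B : ℝ := (F 0 - k₄ * M * T - M' - k₅ * M) / k₆ with hB_def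
  have hdb : ∀ t, 0 ≤ t → t < T → Real.exp B ≤ d t := by
    intro t h1 h2
    have hkey := key t h1 h2
    have hb := hbound t ⟨h1, h2.le⟩
    have hdt : 0 < d t := hlt t h1 h2
    have hν' : ν t ≤ M' := le_of_abs_le hb.2
    have he' : e t ≤ M := le_of_abs_le hb.1
    have hBlog : B ≤ Real.log (d t) := by
      rw [hB_def, div_le_iff₀ hk₆]
      have hFt : F t = k₆ * Real.log (d t) + ν t + k₅ * e t := rfl
      rw [hFt] at hkey
      have hmul : k₅ * e t ≤ k₅ * M := mul_le_mul_of_nonneg_left he' hk₅.le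
      clear_value F M M' T L d B S
      linarith
    calc Real.exp B ≤ Real.exp (Real.log (d t)) := Real.exp_le_exp.mpr hBlog
      _ = d t := Real.exp_log hdt
  have hlim : Tendsto d (𝓝[<] T) (𝓝 (d T)) :=
    (hdc.continuousAt).continuousWithinAt.tendsto
  have hev : ∀ᶠ t in 𝓝[<] T, Real.exp B ≤ d t := by
    filter_upwards [Ioo_mem_nhdsLT_of_mem (Set.mem_Ioc.mpr ⟨hTpos, le_refl T⟩)]
      with t ht
    exact hdb t ht.1.le ht.2
  have hfin : Real.exp B ≤ d T := ge_of_tendsto hlim hev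
  have := Real.exp_pos B
  linarith
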